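/- Let K ⊂ ℝ be compact, m ≥ 1, I = [min K, max K], and write I ∖ K = ∪_{i≥1} (a_i, b_i) as a disjoint union of open intervals with a_i, b_i ∈ K. Let F, G, H be Whitney fields of class C^m on K satisfying condition (★), and let β be a modulus of continuity. Suppose for each i ≥ 1 that (𝓕_i, 𝓖_i, 𝓗_i): [a_i, b_i] → ℝ³ is a C^m curve with 𝓗_i' = 2(𝓕_i'𝓖_i − 𝓖_i'𝓕_i) on [a_i,b_i] such that: D^k 𝓕_i, D^k 𝓖_i, D^k 𝓗_i agree with F^k, G^k, H^k respectively at both endpoints a_i and b_i for 0 ≤ k ≤ m; and |D^k 𝓕_i(x) − F^k(a_i)| ≤ 2β(b_i − a_i), |D^k 𝓖_i(x) − G^k(a_i)| ≤ 2β(b_i − a_i) for all x ∈ [a_i, b_i] and 0 ≤ k ≤ m. Define Γ = (𝓕, 𝓖, 𝓗): I → ℝ³ by Γ(x) = (F(x), G(x), H(x)) for x ∈ K and Γ(x) = (𝓕_i(x), 𝓖_i(x), 𝓗_i(x)) for x ∈ (a_i, b_i). Then Γ is a C^m curve on I (with one-sided derivatives at the endpoints of I), Γ is horizontal, i.e. 𝓗'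 = 2(𝓕'𝓖 − 𝓖'𝓕) on I, and D^k 𝓕(x) = F^k(x), D^k 𝓖(x) = G^k(x), D^k 𝓗(x) = H^k(x) for all x ∈ K and 0 ≤ k ≤ m. -/

import Mathlib

open Set MeasureTheory intervalIntegral

/-- The Taylor polynomial of order `m` of the jet `F` at `a`. -/
noncomputable def TP (m : ℕ) (F : ℕ → ℝ → ℝ) (a x : ℝ) : ℝ :=
  ∑ k ∈ Finset.range (m + 1), F k a * (x - a) ^ k / (Nat.factorial k : ℝ)

/-- A jet of order `m` on `K`: a collection of continuous functions on `K`. -/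
def IsJet (m : ℕ) (K : Set ℝ) (F : ℕ → ℝ → ℝ) : Prop :=
  ∀ k ≤ m, ContinuousOn (F k) K

/-- A Whitney field of class `C^m` on `K`. -/
def IsWhitneyField (m : ℕ) (K : Set ℝ) (F : ℕ → ℝ → ℝ) : Prop :=
  ∀ k ≤ m, ∀ ε > (0 : ℝ), ∃ δ > (0 : ℝ), ∀ a ∈ K, ∀ b ∈ K, |b - a| < δ →
    |F k b - ∑ l ∈ Finset.range (m - k + 1), F (k + l) a * (b - a) ^ l / (Nat.factorial l : ℝ)|
      ≤ ε * |b - a| ^ (m - k)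

/-- Condition (★). -/
def StarCond (m : ℕ) (K : Set ℝ) (F G H : ℕ → ℝ → ℝ) : Prop :=
  ∀ k, 1 ≤ k → k ≤ m → ∀ t ∈ K,
    H k t = 2 * ∑ j ∈ Finset.range k, (Nat.choose (k - 1) j : ℝ) *
      (F (k - j) t * G j t - G (k - j) t * F j t)

/-- The area discrepancy `A(a,b)`. -/
noncomputable def areaA (m : ℕ) (F G H : ℕ → ℝ → ℝ) (a b : ℝ) : ℝ :=
  H 0 b - H 0 a
    - 2 * ∫ x in a..b, (deriv (TP m F a) x * TP m G a x - deriv (TP m G a) x * TP m F a x)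
    + 2 * F 0 a * (G 0 b - TP m G a b) - 2 * G 0 a * (F 0 b - TP m F a b)

/-- The velocity `V(a,b)`. -/
noncomputable def velV (m : ℕ) (F G : ℕ → ℝ → ℝ) (a b : ℝ) : ℝ :=
  (b - a) ^ (2 * m) + (b - a) ^ m *
    ∫ x in a..b, (|deriv (TP m F a) x| + |deriv (TP m G a) x|)

/-- `A(a,b)/V(a,b) → 0` uniformly as `(b-a) ↘ 0` with `a, b ∈ K`. -/
def UniformAV (m : ℕ) (K : Set ℝ) (F G H : ℕ → ℝ → ℝ) : Prop :=
  ∀ ε > (0 : ℝ), ∃ δ > (0 : ℝ), ∀ a ∈ K, ∀ b ∈ K, 0 < b - a → b - a < δ →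
    |areaA m F G H a b| ≤ ε * velV m F G a b

/-- A horizontal curve in the first Heisenberg group. -/
def IsHorizontal (f g h : ℝ → ℝ) : Prop :=
  ∀ t, deriv h t = 2 * (deriv f t * g t - deriv g t * f t)

/-- The triple of jets `(F, G, H)` extends to the curve `(f, g, h)`. -/
def ExtendsJets (m : ℕ) (K : Set ℝ) (F G H : ℕ → ℝ → ℝ) (f g h : ℝ → ℝ) : Prop :=
  ∀ x ∈ K, ∀ k ≤ m, iteratedDeriv k f x = F k x ∧ iteratedDeriv k g x = G k x ∧
    iteratedDeriv k h x = H k x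

/-- A modulus of continuity: an increasing function `[0,∞) → [0,∞)` with `β(0) = 0` and
`β(t) → 0` as `t ↘ 0`. -/
def IsModulus (β : ℝ → ℝ) : Prop :=
  (∀ t, 0 ≤ β t) ∧ MonotoneOn β (Ici 0) ∧ β 0 = 0 ∧
    Filter.Tendsto β (nhdsWithin 0 (Ioi 0)) (nhds 0)



lemma modulus_small {β' : ℝ → ℝ} (hβ' : IsModulus β') {ε : ℝ} (hε : 0 < ε) :
    ∃ L > (0:ℝ), ∀ ℓ, 0 ≤ ℓ → ℓ ≤ L → β' ℓ ≤ ε := by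
  obtain ⟨hβ0, hβmono, hβz, hβt⟩ := hβ'
  have hev : ∀ᶠ t in nhdsWithin 0 (Ioi 0), β' t < ε := by
    exact hβt.eventually (p := fun y => y < ε) (Metric.eventually_nhds_iff.2
      ⟨ε, hε, fun {y} hy => lt_of_le_of_lt (le_abs_self _) (by simpa [Real.dist_eq] using hy)⟩)
  obtain ⟨δ, hδ, hsub⟩ := Metric.mem_nhdsWithin_iff.1 hev
  refine ⟨δ/2, by linarith, fun ℓ hℓ0 hℓL => ?_⟩
  have hδ2 : β' (δ/2) < ε := hsub ⟨by simp [Real.dist_eq]; rw [abs_of_pos (by linarith)]; linarith,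
    by simp; linarith⟩
  exact le_of_lt (lt_of_le_of_lt (hβmono hℓ0 (by simp; linarith) hℓL) hδ2)

lemma hdwa_iff {f : ℝ → ℝ} {f' x : ℝ} {s : Set ℝ} :
    HasDerivWithinAt f f' s x ↔
      ∀ ε > (0:ℝ), ∃ δ > (0:ℝ), ∀ t ∈ s, |t - x| < δ →
        |f t - f x - f' * (t - x)| ≤ ε * |t - x| := by
  rw [hasDerivWithinAt_iff_isLittleO, Asymptotics.isLittleO_iff]
  constructor
  · intro h ε hε
    obtain ⟨δ, hδ, hsub⟩ := Metric.mem_nhdsWithin_iff.1 (h hε)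
    refine ⟨δ, hδ, fun t ht hlt => ?_⟩
    have : t ∈ Metric.ball x δ ∩ s := ⟨by simpa [Real.dist_eq] using hlt, ht⟩
    have h2 := hsub this
    simp only [Real.norm_eq_abs] at h2
    calc |f t - f x - f' * (t - x)| = |f t - f x - (t - x) • f'| := by
          rw [smul_eq_mul, mul_comm]
      _ ≤ ε * |t - x| := h2
  · intro h c hc
    obtain ⟨δ, hδ, hb⟩ := h c hc
    rw [Filter.Eventually]
    apply Metric.mem_nhdsWithin_iff.2 ⟨δ, hδ, ?_⟩
    rintro t ⟨ht1, ht2⟩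
    have := hb t ht2 (by simpa [Real.dist_eq] using ht1)
    simp only [Real.norm_eq_abs, Set.mem_setOf_eq]
    calc |f t - f x - (t - x) • f'| = |f t - f x - f' * (t - x)| := by
          rw [smul_eq_mul, mul_comm]
      _ ≤ c * |t - x| := this

lemma cwa_of_epsdelta {f : ℝ → ℝ} {x : ℝ} {s : Set ℝ}
    (h : ∀ ε > (0:ℝ), ∃ δ > (0:ℝ), ∀ t ∈ s, |t - x| < δ → |f t - f x| ≤ ε) :
    ContinuousWithinAt f s x := by
  rw [Metric.continuousWithinAt_iff]
  intro ε hε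
  obtain ⟨δ, hδ, hb⟩ := h (ε/2) (by linarith)
  exact ⟨δ, hδ, fun {t} ht hlt => by
    have := hb t ht (by simpa [Real.dist_eq] using hlt)
    rw [Real.dist_eq]; linarith⟩

lemma chain_lemma {I : Set ℝ} (hI : UniqueDiffOn ℝ I) (m : ℕ) (pk : ℕ → ℝ → ℝ)
    (hd : ∀ k < m, ∀ x ∈ I, HasDerivWithinAt (pk k) (pk (k+1) x) I x)
    (hc : ContinuousOn (pk m) I) :
    ContDiffOn ℝ (m : ℕ∞) (pk 0) I ∧
      ∀ k ≤ m, ∀ x ∈ I, iteratedDerivWithin k (pk 0) I x = pk k x := by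
  have hcont : ∀ k ≤ m, ContinuousOn (pk k) I := by
    intro k hk
    rcases eq_or_lt_of_le hk with rfl | hk'
    · exact hc
    · exact fun x hx => (hd k hk' x hx).continuousWithinAt
  have key : ∀ j k, k + j ≤ m → ContDiffOn ℝ (j : ℕ) (pk k) I := by
    intro j
    induction j with
    | zero => intro k hk; exact (contDiffOn_zero).2 (hcont k (by omega))
    | succ n ih =>
      intro k hk
      have hklt : k < m := by omega
      have : ContDiffOn ℝ ((n : WithTop ℕ∞) + 1) (pk k) I := by
        rw [contDiffOn_succ_iff_derivWithin hI]
        refine ⟨fun x hx => (hd k hklt x hx).differentiableWithinAt, by simp, ?_⟩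
        have h2 : ContDiffOn ℝ (n : ℕ) (pk (k+1)) I := ih (k+1) (by omega)
        exact h2.congr fun x hx => (hd k hklt x hx).derivWithin (hI x hx)
      exact_mod_cast this
  constructor
  · exact_mod_cast key m 0 (by omega)
  · intro k hk
    induction k with
    | zero => intro x hx; simp [iteratedDerivWithin_zero]
    | succ n ih =>
      intro x hx
      rw [iteratedDerivWithin_succ]
      rw [derivWithin_congr (fun y hy => ih (by omega) y hy) (ih (by omega) x hx)]
      exact (hd n (by omega) x hx).derivWithin (hI x hx)

lemma gaps_sum_le {K : Set ℝ} (hne : K.Nonempty) (hbdd : BddAbove K) (hbdd' : BddBelow K)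
    {a b : ℕ → ℝ} (hab : ∀ i, a i < b i)
    (hdisj : Pairwise (Function.onFun Disjoint fun i => Ioo (a i) (b i)))
    (hsub : ∀ i, Ioo (a i) (b i) ⊆ Icc (sInf K) (sSup K)) :
    Summable (fun i => b i - a i) := by
  have hR : 0 ≤ sSup K - sInf K := by
    have := Real.sInf_le_sSup K hbdd' hbdd
    linarith
  refine summable_of_sum_range_le (c := sSup K - sInf K)
    (fun i => by linarith [hab i]) (fun n => ?_)
  have hmeas : volume (⋃ i ∈ Finset.range n, Ioo (a i) (b i)) =
      ∑ i ∈ Finset.range n, volume (Ioo (a i) (b i)) :=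
    measure_biUnion_finset (fun i _ j _ hij => hdisj hij) (fun i _ => measurableSet_Ioo)
  have hle : volume (⋃ i ∈ Finset.range n, Ioo (a i) (b i)) ≤
      volume (Icc (sInf K) (sSup K)) :=
    measure_mono (iUnion₂_subset fun i _ => hsub i)
  rw [hmeas] at hle
  simp only [Real.volume_Ioo, Real.volume_Icc] at hle
  rw [← ENNReal.ofReal_sum_of_nonneg (fun i _ => by linarith [hab i])] at hle
  exact (ENNReal.ofReal_le_ofReal_iff hR).1 hle

lemma gaps_finite {K : Set ℝ} (hne : K.Nonempty) (hbdd : BddAbove K) (hbdd' : BddBelow K)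
    {a b : ℕ → ℝ} (hab : ∀ i, a i < b i)
    (hdisj : Pairwise (Function.onFun Disjoint fun i => Ioo (a i) (b i)))
    (hsub : ∀ i, Ioo (a i) (b i) ⊆ Icc (sInf K) (sSup K)) {L : ℝ} (hL : 0 < L) :
    {i : ℕ | L < b i - a i}.Finite := by
  have hsum := gaps_sum_le hne hbdd hbdd' hab hdisj hsub
  have htend := hsum.tendsto_cofinite_zero
  have : ∀ᶠ i in Filter.cofinite, (b i - a i) < L :=
    htend.eventually (Metric.eventually_nhds_iff.2
      ⟨L, hL, fun {y} hy => (lt_of_abs_lt (by simpa [Real.dist_eq] using hy) : y < L)⟩)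
  have := Filter.eventually_cofinite.1 this
  exact this.subset fun i hi => by simp only [mem_setOf_eq] at hi ⊢; linarith


lemma jet_bound {K : Set ℝ} (hK : IsCompact K) (m : ℕ) (P : ℕ → ℝ → ℝ)
    (hPc : ∀ k ≤ m, ContinuousOn (P k) K) :
    ∃ M : ℝ, 0 ≤ M ∧ ∀ k ≤ m, ∀ x ∈ K, |P k x| ≤ M := by
  induction m with
  | zero =>
    obtain ⟨C, hC⟩ := hK.exists_bound_of_continuousOn (hPc 0 le_rfl)
    exact ⟨max C 0, le_max_right _ _, fun k hk x hx => by
      interval_cases k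
      exact le_trans (by simpa using hC x hx) (le_max_left _ _)⟩
  | succ n ih =>
    obtain ⟨M, hM0, hM⟩ := ih (fun k hk => hPc k (by omega))
    obtain ⟨C, hC⟩ := hK.exists_bound_of_continuousOn (hPc (n+1) le_rfl)
    refine ⟨max M C, le_trans hM0 (le_max_left _ _), fun k hk x hx => ?_⟩
    rcases Nat.eq_or_lt_of_le hk with rfl | h
    · exact le_trans (by simpa using hC x hx) (le_max_right _ _)
    · exact le_trans (hM k (by omega) x hx) (le_max_left _ _)

lemma whitney_first_order {K : Set ℝ} {m : ℕ} {P : ℕ → ℝ → ℝ}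
    (hW : IsWhitneyField m K P) {M : ℝ} (hM0 : 0 ≤ M)
    (hM : ∀ k ≤ m, ∀ x ∈ K, |P k x| ≤ M) {k : ℕ} (hk : k < m) :
    ∀ ε > (0:ℝ), ∃ δ > (0:ℝ), ∀ x ∈ K, ∀ y ∈ K, |y - x| < δ →
      |P k y - P k x - P (k+1) x * (y - x)| ≤ ε * |y - x| := by
  intro ε hε
  obtain ⟨δ₀, hδ₀, hWk⟩ := hW k hk.le (ε/2) (by linarith)
  set δ := min δ₀ (min 1 (ε / (2 * (m * M + 1)))) with hδdef
  have hδpos : 0 < δ := by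
    apply lt_min hδ₀
    apply lt_min one_pos
    positivity
  refine ⟨δ, hδpos, fun x hx y hy hxy => ?_⟩
  have h1 : |y - x| < δ₀ := lt_of_lt_of_le hxy (min_le_left _ _)
  have h2 : |y - x| ≤ 1 := le_of_lt (lt_of_lt_of_le hxy ((min_le_right _ _).trans (min_le_left _ _)))
  have h3 : δ ≤ ε / (2 * (m * M + 1)) := (min_le_right _ _).trans (min_le_right _ _)
  obtain ⟨r, hr⟩ : ∃ r, m - k = r + 1 := ⟨m - k - 1, by omega⟩
  have habs : (0:ℝ) ≤ |y - x| := abs_nonneg _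
  -- expand the Taylor sum
  set f : ℕ → ℝ := fun l => P (k + l) x * (y - x) ^ l / (Nat.factorial l : ℝ) with hfdef
  have hsplit : ∑ l ∈ Finset.range (m - k + 1), f l
      = (∑ l ∈ Finset.range r, f (l + 2)) + f 1 + f 0 := by
    rw [hr, Finset.sum_range_succ' f (r+1), Finset.sum_range_succ' (fun l => f (l+1)) r]
  have hf0 : f 0 = P k x := by simp [hfdef]
  have hf1 : f 1 = P (k+1) x * (y - x) := by simp [hfdef]
  have htail : |∑ l ∈ Finset.range r, f (l + 2)| ≤ r * (M * |y - x| ^ 2) := by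
    calc |∑ l ∈ Finset.range r, f (l + 2)| ≤ ∑ l ∈ Finset.range r, |f (l + 2)| :=
          Finset.abs_sum_le_sum_abs _ _
      _ ≤ ∑ l ∈ Finset.range r, M * |y - x| ^ 2 := by
          apply Finset.sum_le_sum
          intro l hl
          have hfac : (1:ℝ) ≤ (Nat.factorial (l+2) : ℝ) := by
            exact_mod_cast Nat.one_le_iff_ne_zero.2 (Nat.factorial_ne_zero _)
          have hP : |P (k + (l+2)) x| ≤ M := by
            apply hM _ _ x hx
            have hl' := Finset.mem_range.1 hl
            omega
          have hpow : |y - x| ^ (l + 2) ≤ |y - x| ^ 2 :=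
            pow_le_pow_of_le_one habs h2 (by omega)
          calc |f (l+2)| = |P (k + (l+2)) x| * |y - x| ^ (l+2) / (Nat.factorial (l+2) : ℝ) := by
                rw [hfdef]; rw [abs_div, abs_mul, abs_pow, Nat.abs_cast]
            _ ≤ |P (k + (l+2)) x| * |y - x| ^ (l+2) := by
                apply div_le_self (by positivity) hfac
            _ ≤ M * |y - x| ^ 2 := by
                apply mul_le_mul hP hpow (by positivity) hM0
      _ = r * (M * |y - x| ^ 2) := by rw [Finset.sum_const, nsmul_eq_mul, Finset.card_range]
  have hWxy := hWk x hx y hy h1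
  rw [hsplit, hf0, hf1] at hWxy
  have hpowmk : |y - x| ^ (m - k) ≤ |y - x| := by
    rw [hr]
    calc |y - x| ^ (r + 1) ≤ |y - x| ^ 1 := pow_le_pow_of_le_one habs h2 (by omega)
      _ = |y - x| := pow_one _
  have hsq : |y - x| ^ 2 ≤ δ * |y - x| := by
    rw [sq]
    exact mul_le_mul_of_nonneg_right hxy.le habs
  have hrm : (r:ℝ) ≤ m := by exact_mod_cast (by omega : r ≤ m)
  have key : |P k y - P k x - P (k+1) x * (y - x)| ≤
      (ε/2) * |y - x| + r * (M * |y - x| ^ 2) := by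
    have : P k y - P k x - P (k+1) x * (y - x)
        = (P k y - ((∑ l ∈ Finset.range r, f (l + 2)) + P (k+1) x * (y - x) + P k x))
          + ∑ l ∈ Finset.range r, f (l + 2) := by ring
    rw [this]
    calc _ ≤ |P k y - ((∑ l ∈ Finset.range r, f (l + 2)) + P (k+1) x * (y - x) + P k x)|
          + |∑ l ∈ Finset.range r, f (l + 2)| := abs_add_le _ _
      _ ≤ (ε/2) * |y - x| ^ (m-k) + r * (M * |y - x| ^ 2) := add_le_add hWxy htail
      _ ≤ (ε/2) * |y - x| + r * (M * |y - x| ^ 2) := by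
          have := mul_le_mul_of_nonneg_left hpowmk (by linarith : (0:ℝ) ≤ ε/2)
          linarith
  have htail2 : (r:ℝ) * (M * |y - x| ^ 2) ≤ (ε/2) * |y - x| := by
    have h4 : (r:ℝ) * (M * |y - x| ^ 2) ≤ (m * M) * (δ * |y - x|) := by
      have := mul_le_mul_of_nonneg_left hsq (mul_nonneg (Nat.cast_nonneg r) hM0)
      calc (r:ℝ) * (M * |y - x| ^ 2) = ((r:ℝ) * M) * |y - x| ^ 2 := by ring
        _ ≤ ((r:ℝ) * M) * (δ * |y - x|) := by
            apply mul_le_mul_of_nonneg_left hsq (mul_nonneg (Nat.cast_nonneg r) hM0)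
        _ ≤ ((m:ℝ) * M) * (δ * |y - x|) := by
            apply mul_le_mul_of_nonneg_right (mul_le_mul_of_nonneg_right hrm hM0)
            positivity
    have h5 : (m * M) * δ ≤ ε/2 := by
      have hpos : (0:ℝ) < m * M + 1 := by positivity
      calc (m * M : ℝ) * δ ≤ (m * M) * (ε / (2 * (m * M + 1))) := by
            apply mul_le_mul_of_nonneg_left h3 (by positivity)
        _ ≤ ε/2 := by
            rw [← mul_div_assoc, div_le_div_iff₀ (by positivity) (by norm_num : (0:ℝ) < 2)]
            nlinarith [mul_nonneg (Nat.cast_nonneg (α := ℝ) m) hM0]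
    calc (r:ℝ) * (M * |y - x| ^ 2) ≤ (m * M) * δ * |y - x| := by
          rw [mul_assoc]; exact h4
      _ ≤ (ε/2) * |y - x| := mul_le_mul_of_nonneg_right h5 habs
  linarith

lemma gap_deriv {c d : ℝ} (hcd : c < d) {Pc : ℝ → ℝ} {m k : ℕ} (hk : k < m)
    (hreg : ContDiffOn ℝ (m : ℕ∞) Pc (Icc c d)) :
    ∀ t ∈ Icc c d, HasDerivWithinAt (iteratedDerivWithin k Pc (Icc c d))
      (iteratedDerivWithin (k+1) Pc (Icc c d) t) (Icc c d) t := by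
  intro t ht
  have hdiff := hreg.differentiableOn_iteratedDerivWithin
    (by exact_mod_cast hk) (uniqueDiffOn_Icc hcd)
  have h := (hdiff t ht).hasDerivWithinAt
  rwa [← iteratedDerivWithin_succ] at h

lemma gap_taylor1 {c d : ℝ} (hcd : c < d) {Pc : ℝ → ℝ} {m k : ℕ} (hk : k + 1 ≤ m)
    (hreg : ContDiffOn ℝ (m : ℕ∞) Pc (Icc c d))
    {e : ℝ} (he : e ∈ Icc c d) {pk pk1 B : ℝ}
    (hB : ∀ s ∈ Icc c d, |iteratedDerivWithin (k+1) Pc (Icc c d) s - pk1| ≤ B)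
    (hpe : iteratedDerivWithin k Pc (Icc c d) e = pk) :
    ∀ t ∈ Icc c d, |iteratedDerivWithin k Pc (Icc c d) t - pk - pk1 * (t - e)| ≤ B * |t - e| := by
  intro t ht
  set g : ℝ → ℝ := fun s => iteratedDerivWithin k Pc (Icc c d) s - pk - pk1 * (s - e) with hg
  have hgd : ∀ s ∈ Icc c d, HasDerivWithinAt g
      (iteratedDerivWithin (k+1) Pc (Icc c d) s - pk1) (Icc c d) s := by
    intro s hs
    have h1 := gap_deriv (m := m) (k := k) hcd (by omega) hreg s hs
    have h2 : HasDerivWithinAt (fun s => pk1 * (s - e)) pk1 (Icc c d) s := by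
      simpa using (((hasDerivWithinAt_id s (Icc c d)).sub_const e).const_mul pk1)
    exact (h1.sub_const pk).sub h2
  have := Convex.norm_image_sub_le_of_norm_hasDerivWithin_le hgd
    (fun s hs => by simpa [Real.norm_eq_abs] using hB s hs) (convex_Icc c d) he ht
  simp only [Real.norm_eq_abs, hg] at this
  rw [hpe] at this
  simpa using this

lemma pascal_sum (k : ℕ) (X : ℕ → ℝ) :
    ∑ j ∈ Finset.range (k+1), (Nat.choose k j : ℝ) * (X j + X (j+1))
      = ∑ j ∈ Finset.range (k+2), (Nat.choose (k+1) j : ℝ) * X j := by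
  have h1 : ∑ j ∈ Finset.range (k+1), (Nat.choose k j : ℝ) * X j
      = ∑ j ∈ Finset.range (k+2), (Nat.choose k j : ℝ) * X j := by
    rw [Finset.sum_range_succ (fun j => ((Nat.choose k j : ℝ) * X j)) (k+1),
      Nat.choose_eq_zero_of_lt (by omega : k < k+1)]
    simp
  set h : ℕ → ℝ := fun j => (if j = 0 then (0:ℝ) else (Nat.choose k (j-1) : ℝ)) * X j with hh
  have h2 : ∑ j ∈ Finset.range (k+1), (Nat.choose k j : ℝ) * X (j+1)
      = ∑ j ∈ Finset.range (k+2), h j := by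
    rw [Finset.sum_range_succ' h (k+1)]
    simp [hh]
  calc ∑ j ∈ Finset.range (k+1), (Nat.choose k j : ℝ) * (X j + X (j+1))
      = (∑ j ∈ Finset.range (k+1), (Nat.choose k j : ℝ) * X j)
        + ∑ j ∈ Finset.range (k+1), (Nat.choose k j : ℝ) * X (j+1) := by
        rw [← Finset.sum_add_distrib]; congr 1; ext j; ring
    _ = ∑ j ∈ Finset.range (k+2), ((Nat.choose k j : ℝ) * X j + h j) := by
        rw [h1, h2, Finset.sum_add_distrib]
    _ = ∑ j ∈ Finset.range (k+2), (Nat.choose (k+1) j : ℝ) * X j := by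
        apply Finset.sum_congr rfl
        intro j _
        rcases j with _ | i
        · simp [hh]
        · simp only [hh, if_neg (Nat.succ_ne_zero _), Nat.add_sub_cancel]
          rw [← add_mul]
          congr 1
          rw [Nat.choose_succ_succ (k) (i)]
          push_cast
          ring

lemma leibniz_ode {c d : ℝ} (hcd : c < d) {f g h : ℝ → ℝ} {m : ℕ}
    (hf : ContDiffOn ℝ (m : ℕ∞) f (Icc c d)) (hg : ContDiffOn ℝ (m : ℕ∞) g (Icc c d))
    (hh : ContDiffOn ℝ (m : ℕ∞) h (Icc c d))
    (hode : ∀ t ∈ Icc c d, derivWithin h (Icc c d) t =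
      2 * (derivWithin f (Icc c d) t * g t - derivWithin g (Icc c d) t * f t)) :
    ∀ k, 1 ≤ k → k ≤ m → ∀ t ∈ Icc c d,
      iteratedDerivWithin k h (Icc c d) t = 2 * ∑ j ∈ Finset.range k, (Nat.choose (k-1) j : ℝ) *
        (iteratedDerivWithin (k-j) f (Icc c d) t * iteratedDerivWithin j g (Icc c d) t -
         iteratedDerivWithin (k-j) g (Icc c d) t * iteratedDerivWithin j f (Icc c d) t) := by
  have hud := uniqueDiffOn_Icc hcd
  set s := Icc c d with hs
  set A : ℕ → ℝ → ℝ := fun p t => iteratedDerivWithin p f s t with hA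
  set B : ℕ → ℝ → ℝ := fun p t => iteratedDerivWithin p g s t with hB
  intro k
  induction k with
  | zero => omega
  | succ n ih =>
    intro _ hnm t ht
    rcases Nat.eq_zero_or_pos n with rfl | hn
    · -- base case k = 1
      rw [iteratedDerivWithin_one, hode t ht]
      simp [Finset.sum_range_one, iteratedDerivWithin_one, iteratedDerivWithin_zero]
    · -- step case
      have hih : ∀ t ∈ s, iteratedDerivWithin n h s t
          = 2 * ∑ j ∈ Finset.range n, (Nat.choose (n-1) j : ℝ) *
            (A (n-j) t * B j t - B (n-j) t * A j t) :=
        fun t ht => ih hn (by omega) t ht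
      have hAd : ∀ p, p < m → ∀ t ∈ s, HasDerivWithinAt (A p) (A (p+1) t) s t :=
        fun p hp => gap_deriv (m := m) (k := p) hcd hp hf
      have hBd : ∀ p, p < m → ∀ t ∈ s, HasDerivWithinAt (B p) (B (p+1) t) s t :=
        fun p hp => gap_deriv (m := m) (k := p) hcd hp hg
      -- derivative of RHS_n
      have hsumd : HasDerivWithinAt
          (fun u => 2 * ∑ j ∈ Finset.range n, (Nat.choose (n-1) j : ℝ) *
            (A (n-j) u * B j u - B (n-j) u * A j u))
          (2 * ∑ j ∈ Finset.range n, (Nat.choose (n-1) j : ℝ) *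
            ((A (n-j+1) t * B j t + A (n-j) t * B (j+1) t)
              - (B (n-j+1) t * A j t + B (n-j) t * A (j+1) t))) s t := by
        apply HasDerivWithinAt.const_mul
        apply HasDerivWithinAt.fun_sum
        intro j hj
        have hjn := Finset.mem_range.1 hj
        have h1 : n - j < m := by omega
        have h2 : j < m := by omega
        exact (((hAd _ h1 t ht).mul (hBd _ h2 t ht)).sub
          ((hBd _ h1 t ht).mul (hAd _ h2 t ht))).const_mul _
      have hder : iteratedDerivWithin (n+1) h s t
          = 2 * ∑ j ∈ Finset.range n, (Nat.choose (n-1) j : ℝ) *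
            ((A (n-j+1) t * B j t + A (n-j) t * B (j+1) t)
              - (B (n-j+1) t * A j t + B (n-j) t * A (j+1) t)) := by
        rw [iteratedDerivWithin_succ]
        rw [derivWithin_congr hih (hih t ht)]
        exact hsumd.derivWithin (hud t ht)
      rw [hder]
      -- now the Pascal recombination
      congr 1
      set X : ℕ → ℝ := fun j => A (n+1-j) t * B j t - B (n+1-j) t * A j t with hX
      obtain ⟨n', rfl⟩ : ∃ n', n = n' + 1 := ⟨n - 1, by omega⟩
      have hL : ∑ j ∈ Finset.range (n'+1), (Nat.choose (n'+1-1) j : ℝ) *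
            ((A (n'+1-j+1) t * B j t + A (n'+1-j) t * B (j+1) t)
              - (B (n'+1-j+1) t * A j t + B (n'+1-j) t * A (j+1) t))
          = ∑ j ∈ Finset.range (n'+1), (Nat.choose n' j : ℝ) * (X j + X (j+1)) := by
        apply Finset.sum_congr rfl
        intro j hj
        have hjn := Finset.mem_range.1 hj
        have e1 : n' + 1 - j + 1 = n' + 1 + 1 - j := by omega
        have e2 : n' + 1 - j = n' + 1 + 1 - (j + 1) := by omega
        have e3 : n' + 1 - 1 = n' := by omega
        rw [e1, e2, e3]
        simp only [hX]
        have e4 : n' + 1 + 1 - j = n' + 2 - j := by omega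
        ring
      rw [hL, pascal_sum]
      apply Finset.sum_congr rfl
      intro j _
      simp only [hX, hA, hB, Nat.add_sub_cancel]

lemma MAIN (m : ℕ) (hm : 1 ≤ m) {K : Set ℝ} (hK : IsCompact K) (hne : K.Nonempty)
    {a b : ℕ → ℝ} (hmem : ∀ i, a i ∈ K ∧ b i ∈ K ∧ a i < b i)
    (hdisj : Pairwise (Function.onFun Disjoint fun i => Ioo (a i) (b i)))
    (hIK : ∀ x ∈ Icc (sInf K) (sSup K), x ∉ K → ∃ i, x ∈ Ioo (a i) (b i))
    (hgapK : ∀ i, ∀ x ∈ Ioo (a i) (b i), x ∉ K)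
    (hgapI : ∀ i, Ioo (a i) (b i) ⊆ Icc (sInf K) (sSup K))
    {P : ℕ → ℝ → ℝ} (hPc : ∀ k ≤ m, ContinuousOn (P k) K) (hW : IsWhitneyField m K P)
    {β' : ℝ → ℝ} (hβ' : IsModulus β')
    {Pc : ℕ → ℝ → ℝ} (hreg : ∀ i, ContDiffOn ℝ (m : ℕ∞) (Pc i) (Icc (a i) (b i)))
    (hend : ∀ i, ∀ k ≤ m,
      iteratedDerivWithin k (Pc i) (Icc (a i) (b i)) (a i) = P k (a i) ∧
      iteratedDerivWithin k (Pc i) (Icc (a i) (b i)) (b i) = P k (b i))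
    (hbnd : ∀ i, ∀ k, 1 ≤ k → k ≤ m → ∀ x ∈ Icc (a i) (b i),
      |iteratedDerivWithin k (Pc i) (Icc (a i) (b i)) x - P k (a i)| ≤ β' (b i - a i))
    {pk : ℕ → ℝ → ℝ}
    (hpK : ∀ k ≤ m, ∀ x ∈ K, pk k x = P k x)
    (hpG : ∀ k ≤ m, ∀ i, ∀ x ∈ Ioo (a i) (b i),
      pk k x = iteratedDerivWithin k (Pc i) (Icc (a i) (b i)) x) :
    (∀ k < m, ∀ x ∈ Icc (sInf K) (sSup K),
      HasDerivWithinAt (pk k) (pk (k+1) x) (Icc (sInf K) (sSup K)) x) ∧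
      ContinuousOn (pk m) (Icc (sInf K) (sSup K)) := by
  set I : Set ℝ := Icc (sInf K) (sSup K) with hIdef
  have hKI : K ⊆ I := fun x hx => ⟨csInf_le hK.bddBelow hx, le_csSup hK.bddAbove hx⟩
  obtain ⟨M, hM0, hM⟩ := jet_bound hK m P hPc
  -- uniform continuity of the jets on K
  have hUC : ∀ k ≤ m, ∀ ε > (0:ℝ), ∃ δ > (0:ℝ), ∀ x ∈ K, ∀ y ∈ K, |y - x| < δ →
      |P k y - P k x| ≤ ε := by
    intro k hk ε hε
    have := Metric.uniformContinuousOn_iff.1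
      (hK.uniformContinuousOn_of_continuous (hPc k hk)) ε hε
    obtain ⟨δ, hδ, hd⟩ := this
    exact ⟨δ, hδ, fun x hx y hy hxy => le_of_lt (by
      have := hd y hy x hx (by rwa [Real.dist_eq])
      rwa [Real.dist_eq] at this)⟩
  -- two-endpoint bound in the gaps
  have hbnd2 : ∀ i, ∀ k, 1 ≤ k → k ≤ m → ∀ x ∈ Icc (a i) (b i), ∀ e, (e = a i ∨ e = b i) →
      |iteratedDerivWithin k (Pc i) (Icc (a i) (b i)) x - P k e| ≤ 2 * β' (b i - a i) := by
    intro i k hk1 hkm x hx e he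
    have hb0 := hβ'.1 (b i - a i)
    rcases he with rfl | rfl
    · exact le_trans (hbnd i k hk1 hkm x hx) (by linarith)
    · have h1 := hbnd i k hk1 hkm x hx
      have h2 := hbnd i k hk1 hkm (b i) (right_mem_Icc.2 (hmem i).2.2.le)
      rw [(hend i k hkm).2] at h2
      calc |iteratedDerivWithin k (Pc i) (Icc (a i) (b i)) x - P k (b i)|
          = |(iteratedDerivWithin k (Pc i) (Icc (a i) (b i)) x - P k (a i))
            - (P k (b i) - P k (a i))| := by ring_nf
        _ ≤ |iteratedDerivWithin k (Pc i) (Icc (a i) (b i)) x - P k (a i)|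
            + |P k (b i) - P k (a i)| := abs_sub _ _
        _ ≤ 2 * β' (b i - a i) := by linarith
  -- membership facts
  have hxK_notIoo : ∀ x ∈ K, ∀ i, x ∉ Ioo (a i) (b i) := fun x hx i hmem' => hgapK i x hmem' hx
  have hcases : ∀ x ∈ K, ∀ i, x ≤ a i ∨ b i ≤ x := by
    intro x hx i
    by_contra hcon
    push_neg at hcon
    exact hxK_notIoo x hx i ⟨hcon.1, hcon.2⟩
  constructor
  · -- differentiability part
    intro k hkm x hxI
    by_cases hxK : x ∈ K
    swap
    · -- gap interior point
      obtain ⟨i, hxi⟩ := hIK x hxI hxK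
      have hab := (hmem i).2.2
      have hIccnhds : Icc (a i) (b i) ∈ nhds x := Icc_mem_nhds hxi.1 hxi.2
      have hder := (gap_deriv (m := m) (k := k) hab hkm (hreg i) x (Ioo_subset_Icc_self hxi)).hasDerivAt hIccnhds
      have hev : pk k =ᶠ[nhds x] iteratedDerivWithin k (Pc i) (Icc (a i) (b i)) :=
        Filter.eventually_of_mem (isOpen_Ioo.mem_nhds hxi) (fun y hy => hpG k hkm.le i y hy)
      have hder2 : HasDerivAt (pk k) (iteratedDerivWithin (k+1) (Pc i) (Icc (a i) (b i)) x) x :=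
        hder.congr_of_eventuallyEq hev
      rw [← hpG (k+1) hkm i x hxi] at hder2
      exact hder2.hasDerivWithinAt
    · -- point of K
      rw [hdwa_iff]
      intro ε hε
      obtain ⟨δ₁, hδ₁, hW1⟩ := whitney_first_order hW hM0 hM hkm (ε/3) (by linarith)
      obtain ⟨δ₂, hδ₂, hUC1⟩ := hUC (k+1) hkm (ε/3) (by linarith)
      obtain ⟨L₀, hL₀, hL₀b⟩ := modulus_small hβ' (ε := ε/6) (by linarith)
      have hfin := gaps_finite hne hK.bddAbove hK.bddBelow (fun i => (hmem i).2.2) hdisj hgapI hL₀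
      -- per-long-gap deltas
      have hSd : ∀ i, ∃ δi > (0:ℝ), L₀ < b i - a i → ∀ t ∈ Ioo (a i) (b i), |t - x| < δi →
          |pk k t - pk k x - P (k+1) x * (t - x)| ≤ ε * |t - x| := by
        intro i
        have hab := (hmem i).2.2
        rcases hcases x hxK i with hx1 | hx1
        · rcases eq_or_lt_of_le hx1 with rfl | hxlt
          · -- x = a i : adjacent gap on the right
            have hder := gap_deriv (m := m) (k := k) hab hkm (hreg i) (a i)
              (left_mem_Icc.2 hab.le)
            rw [(hend i (k+1) hkm).1] at hder
            obtain ⟨δi, hδi, hdb⟩ := hdwa_iff.1 hder ε hε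
            refine ⟨δi, hδi, fun _ t ht hlt => ?_⟩
            have := hdb t (Ioo_subset_Icc_self ht) hlt
            rwa [hpG k hkm.le i t ht, hpK k hkm.le _ hxK, ← (hend i k hkm.le).1]
          · -- x strictly left of the gap
            refine ⟨a i - x, by linarith, fun _ t ht hlt => absurd hlt (not_lt.2 ?_)⟩
            rw [abs_of_pos (by linarith [ht.1] : (0:ℝ) < t - x)]
            linarith [ht.1]
        · rcases eq_or_lt_of_le hx1 with rfl | hxlt
          · -- x = b i : adjacent gap on the left
            have hder := gap_deriv (m := m) (k := k) hab hkm (hreg i) (b i)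
              (right_mem_Icc.2 hab.le)
            rw [(hend i (k+1) hkm).2] at hder
            obtain ⟨δi, hδi, hdb⟩ := hdwa_iff.1 hder ε hε
            refine ⟨δi, hδi, fun _ t ht hlt => ?_⟩
            have := hdb t (Ioo_subset_Icc_self ht) hlt
            rwa [hpG k hkm.le i t ht, hpK k hkm.le _ hxK, ← (hend i k hkm.le).2]
          · refine ⟨x - b i, by linarith, fun _ t ht hlt => absurd hlt (not_lt.2 ?_)⟩
            rw [abs_of_neg (by linarith [ht.2] : t - x < 0)]
            linarith [ht.2]
      choose dS hdS0 hdSP using hSd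
      set T : Finset ℕ := insert 0 hfin.toFinset with hT
      have hTne : T.Nonempty := ⟨0, Finset.mem_insert_self _ _⟩
      set δS := T.inf' hTne dS with hδS
      have hδS0 : 0 < δS := (Finset.lt_inf'_iff hTne).2 fun i _ => hdS0 i
      set δ := min δ₁ (min δ₂ δS) with hδ
      refine ⟨δ, by positivity, fun t htI hlt => ?_⟩
      have hlt1 : |t - x| < δ₁ := lt_of_lt_of_le hlt (min_le_left _ _)
      have hlt2 : |t - x| < δ₂ := lt_of_lt_of_le hlt ((min_le_right _ _).trans (min_le_left _ _))
      have hltS : |t - x| < δS := lt_of_lt_of_le hlt ((min_le_right _ _).trans (min_le_right _ _))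
      rw [hpK k hkm.le x hxK, hpK (k+1) hkm x hxK]
      by_cases htK : t ∈ K
      · rw [hpK k hkm.le t htK]
        exact le_trans (hW1 x hxK t htK hlt1) (by nlinarith [abs_nonneg (t-x)])
      · obtain ⟨i, hti⟩ := hIK t htI htK
        have hab := (hmem i).2.2
        by_cases hiS : L₀ < b i - a i
        · -- long gap
          have hiT : i ∈ T := Finset.mem_insert_of_mem (hfin.mem_toFinset.2 hiS)
          have := hdSP i hiS t hti (lt_of_lt_of_le hltS (Finset.inf'_le dS hiT))
          rw [hpK k hkm.le x hxK] at this
          exact this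
        · -- short gap
          push_neg at hiS
          have hβsmall : β' (b i - a i) ≤ ε/6 := hL₀b _ (by linarith) hiS
          rw [hpG k hkm.le i t hti]
          -- choose the near endpoint e
          have hecore : ∀ e, e ∈ K → (e = a i ∨ e = b i) → |t - e| ≤ |t - x| →
              |e - x| ≤ |t - x| →
              |iteratedDerivWithin k (Pc i) (Icc (a i) (b i)) t - P k x - P (k+1) x * (t - x)|
                ≤ ε * |t - x| := by
            intro e heK hee hte hex
            have heIcc : e ∈ Icc (a i) (b i) := by
              rcases hee with rfl | rfl
              · exact left_mem_Icc.2 hab.le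
              · exact right_mem_Icc.2 hab.le
            have hT1 : |iteratedDerivWithin k (Pc i) (Icc (a i) (b i)) t - P k e
                - P (k+1) e * (t - e)| ≤ 2 * β' (b i - a i) * |t - e| := by
              apply gap_taylor1 hab hkm (hreg i) heIcc
                (fun s hs => hbnd2 i (k+1) (by omega) hkm s hs e hee) ?_ t (Ioo_subset_Icc_self hti)
              rcases hee with rfl | rfl
              · exact (hend i k hkm.le).1
              · exact (hend i k hkm.le).2
            have hex2 : |e - x| < δ₁ := lt_of_le_of_lt hex hlt1
            have hex3 : |e - x| < δ₂ := lt_of_le_of_lt hex hlt2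
            have hT2 : |P k e - P k x - P (k+1) x * (e - x)| ≤ (ε/3) * |e - x| :=
              hW1 x hxK e heK hex2
            have hT3 : |P (k+1) e - P (k+1) x| ≤ ε/3 := hUC1 x hxK e heK hex3
            have hsplit : iteratedDerivWithin k (Pc i) (Icc (a i) (b i)) t - P k x
                - P (k+1) x * (t - x)
                = (iteratedDerivWithin k (Pc i) (Icc (a i) (b i)) t - P k e - P (k+1) e * (t - e))
                  + (P k e - P k x - P (k+1) x * (e - x))
                  + (P (k+1) e - P (k+1) x) * (t - e) := by ring
            rw [hsplit]
            have habs1 : 0 ≤ |t - x| := abs_nonneg _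
            calc |_ + _ + _| ≤ |iteratedDerivWithin k (Pc i) (Icc (a i) (b i)) t - P k e
                  - P (k+1) e * (t - e)| + |P k e - P k x - P (k+1) x * (e - x)|
                  + |(P (k+1) e - P (k+1) x) * (t - e)| := abs_add_three _ _ _
              _ ≤ 2 * β' (b i - a i) * |t - e| + (ε/3) * |e - x| + (ε/3) * |t - e| := by
                  have := abs_mul (P (k+1) e - P (k+1) x) (t - e)
                  have h3 : |(P (k+1) e - P (k+1) x) * (t - e)| ≤ (ε/3) * |t - e| := by
                    rw [abs_mul]
                    exact mul_le_mul_of_nonneg_right hT3 (abs_nonneg _)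
                  linarith
              _ ≤ (ε/3) * |t - x| + (ε/3) * |t - x| + (ε/3) * |t - x| := by
                  have h1 : 2 * β' (b i - a i) * |t - e| ≤ (ε/3) * |t - e| := by
                    apply mul_le_mul_of_nonneg_right _ (abs_nonneg _)
                    linarith
                  have h2 : (ε/3) * |t - e| ≤ (ε/3) * |t - x| :=
                    mul_le_mul_of_nonneg_left hte (by linarith)
                  have h4 : (ε/3) * |e - x| ≤ (ε/3) * |t - x| :=
                    mul_le_mul_of_nonneg_left hex (by linarith)
                  linarith
              _ = ε * |t - x| := by ring
          rcases hcases x hxK i with hx1 | hx1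
          · refine hecore (a i) (hmem i).1 (Or.inl rfl) ?_ ?_
            · rw [abs_of_pos (by linarith [hti.1] : (0:ℝ) < t - a i),
                abs_of_pos (by linarith [hti.1] : (0:ℝ) < t - x)]
              linarith
            · rw [abs_of_nonneg (by linarith : (0:ℝ) ≤ a i - x),
                abs_of_pos (by linarith [hti.1] : (0:ℝ) < t - x)]
              linarith [hti.1]
          · refine hecore (b i) (hmem i).2.1 (Or.inr rfl) ?_ ?_
            · rw [abs_of_neg (by linarith [hti.2] : t - b i < 0),
                abs_of_neg (by linarith [hti.2] : t - x < 0)]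
              linarith
            · rw [abs_of_nonpos (by linarith : b i - x ≤ 0),
                abs_of_neg (by linarith [hti.2] : t - x < 0)]
              linarith [hti.2]
  · -- continuity of pk m
    intro x hxI
    by_cases hxK : x ∈ K
    swap
    · obtain ⟨i, hxi⟩ := hIK x hxI hxK
      have hab := (hmem i).2.2
      have hIccnhds : Icc (a i) (b i) ∈ nhds x := Icc_mem_nhds hxi.1 hxi.2
      have hcont : ContinuousAt (iteratedDerivWithin m (Pc i) (Icc (a i) (b i))) x :=
        (((hreg i).continuousOn_iteratedDerivWithin (le_refl _) (uniqueDiffOn_Icc hab)) x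
          (Ioo_subset_Icc_self hxi)).continuousAt hIccnhds
      have hev : pk m =ᶠ[nhds x] iteratedDerivWithin m (Pc i) (Icc (a i) (b i)) :=
        Filter.eventually_of_mem (isOpen_Ioo.mem_nhds hxi) (fun y hy => hpG m le_rfl i y hy)
      exact (hcont.congr hev.symm).continuousWithinAt
    · apply cwa_of_epsdelta
      intro ε hε
      obtain ⟨δ₂, hδ₂, hUC1⟩ := hUC m le_rfl (ε/3) (by linarith)
      obtain ⟨L₀, hL₀, hL₀b⟩ := modulus_small hβ' (ε := ε/3) (by linarith)
      have hfin := gaps_finite hne hK.bddAbove hK.bddBelow (fun i => (hmem i).2.2) hdisj hgapI hL₀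
      have hSd : ∀ i, ∃ δi > (0:ℝ), L₀ < b i - a i → ∀ t ∈ Ioo (a i) (b i), |t - x| < δi →
          |pk m t - pk m x| ≤ ε := by
        intro i
        have hab := (hmem i).2.2
        have hadj : x ∈ Icc (a i) (b i) → ∃ δi > (0:ℝ), ∀ t ∈ Ioo (a i) (b i), |t - x| < δi →
            |pk m t - pk m x| ≤ ε := by
          intro hxIcc
          have hcont := ((hreg i).continuousOn_iteratedDerivWithin (le_refl _)
            (uniqueDiffOn_Icc hab)) x hxIcc
          obtain ⟨δi, hδi, hdb⟩ := Metric.continuousWithinAt_iff.1 hcont ε hε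
          refine ⟨δi, hδi, fun t ht hlt => ?_⟩
          have := hdb (Ioo_subset_Icc_self ht) (by rwa [Real.dist_eq])
          rw [Real.dist_eq] at this
          rw [hpG m le_rfl i t ht, hpK m le_rfl x hxK]
          have hx_end : iteratedDerivWithin m (Pc i) (Icc (a i) (b i)) x = P m x := by
            rcases hcases x hxK i with hx1 | hx1
            · have : x = a i := le_antisymm hx1 hxIcc.1
              rw [this]; exact (hend i m le_rfl).1
            · have : x = b i := le_antisymm hxIcc.2 hx1
              rw [this]; exact (hend i m le_rfl).2
          rw [← hx_end]
          exact this.le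
        rcases hcases x hxK i with hx1 | hx1
        · rcases eq_or_lt_of_le hx1 with heq | hxlt
          · obtain ⟨δi, h1, h2⟩ := hadj (by rw [heq]; exact left_mem_Icc.2 hab.le)
            exact ⟨δi, h1, fun _ => h2⟩
          · refine ⟨a i - x, by linarith, fun _ t ht hlt => absurd hlt (not_lt.2 ?_)⟩
            rw [abs_of_pos (by linarith [ht.1] : (0:ℝ) < t - x)]
            linarith [ht.1]
        · rcases eq_or_lt_of_le hx1 with heq | hxlt
          · obtain ⟨δi, h1, h2⟩ := hadj (by rw [← heq]; exact right_mem_Icc.2 hab.le)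
            exact ⟨δi, h1, fun _ => h2⟩
          · refine ⟨x - b i, by linarith, fun _ t ht hlt => absurd hlt (not_lt.2 ?_)⟩
            rw [abs_of_neg (by linarith [ht.2] : t - x < 0)]
            linarith [ht.2]
      choose dS hdS0 hdSP using hSd
      set T : Finset ℕ := insert 0 hfin.toFinset with hT
      have hTne : T.Nonempty := ⟨0, Finset.mem_insert_self _ _⟩
      set δS := T.inf' hTne dS with hδS
      have hδS0 : 0 < δS := (Finset.lt_inf'_iff hTne).2 fun i _ => hdS0 i
      refine ⟨min δ₂ δS, lt_min hδ₂ hδS0, fun t htI hlt => ?_⟩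
      have hlt2 : |t - x| < δ₂ := lt_of_lt_of_le hlt (min_le_left _ _)
      have hltS : |t - x| < δS := lt_of_lt_of_le hlt (min_le_right _ _)
      rw [hpK m le_rfl x hxK]
      by_cases htK : t ∈ K
      · rw [hpK m le_rfl t htK]
        exact le_trans (hUC1 x hxK t htK hlt2) (by linarith)
      · obtain ⟨i, hti⟩ := hIK t htI htK
        have hab := (hmem i).2.2
        by_cases hiS : L₀ < b i - a i
        · have hiT : i ∈ T := Finset.mem_insert_of_mem (hfin.mem_toFinset.2 hiS)
          have := hdSP i hiS t hti (lt_of_lt_of_le hltS (Finset.inf'_le dS hiT))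
          rwa [hpK m le_rfl x hxK] at this
        · push_neg at hiS
          have hβsmall : β' (b i - a i) ≤ ε/3 := hL₀b _ (by linarith) hiS
          rw [hpG m le_rfl i t hti]
          have hecore : ∀ e, e ∈ K → (e = a i ∨ e = b i) → |e - x| ≤ |t - x| →
              |iteratedDerivWithin m (Pc i) (Icc (a i) (b i)) t - P m x| ≤ ε := by
            intro e heK hee hex
            have hT1 := hbnd2 i m hm le_rfl t (Ioo_subset_Icc_self hti) e hee
            have hT2 : |P m e - P m x| ≤ ε/3 := hUC1 x hxK e heK (lt_of_le_of_lt hex hlt2)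
            calc |iteratedDerivWithin m (Pc i) (Icc (a i) (b i)) t - P m x|
                = |(iteratedDerivWithin m (Pc i) (Icc (a i) (b i)) t - P m e)
                  + (P m e - P m x)| := by ring_nf
              _ ≤ |iteratedDerivWithin m (Pc i) (Icc (a i) (b i)) t - P m e|
                  + |P m e - P m x| := abs_add_le _ _
              _ ≤ 2 * β' (b i - a i) + ε/3 := by linarith
              _ ≤ ε := by linarith
          rcases hcases x hxK i with hx1 | hx1
          · refine hecore (a i) (hmem i).1 (Or.inl rfl) ?_
            rw [abs_of_nonneg (by linarith : (0:ℝ) ≤ a i - x),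
              abs_of_pos (by linarith [hti.1] : (0:ℝ) < t - x)]
            linarith [hti.1]
          · refine hecore (b i) (hmem i).2.1 (Or.inr rfl) ?_
            rw [abs_of_nonpos (by linarith : b i - x ≤ 0),
              abs_of_neg (by linarith [hti.2] : t - x < 0)]
            linarith [hti.2]

lemma prod_diff_bound {u1 u2 v1 v2 M B βv : ℝ} (hM0 : 0 ≤ M) (hB : 0 ≤ B) (hβv : 0 ≤ βv)
    (hβvB : βv ≤ B) (h1 : |u1 - v1| ≤ 2*βv) (h2 : |u2 - v2| ≤ 2*βv)
    (hv1 : |v1| ≤ M) (hv2 : |v2| ≤ M) :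
    |u1 * u2 - v1 * v2| ≤ 4 * (M + B) * βv := by
  have hu2 : |u2| ≤ M + 2*B := by
    have := abs_sub_abs_le_abs_sub u2 v2
    linarith
  calc |u1 * u2 - v1 * v2| = |(u1 - v1) * u2 + v1 * (u2 - v2)| := by ring_nf
    _ ≤ |(u1 - v1) * u2| + |v1 * (u2 - v2)| := abs_add_le _ _
    _ = |u1 - v1| * |u2| + |v1| * |u2 - v2| := by rw [abs_mul, abs_mul]
    _ ≤ (2*βv) * (M + 2*B) + M * (2*βv) := by
        apply add_le_add
        · exact mul_le_mul h1 hu2 (abs_nonneg _) (by positivity)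
        · exact mul_le_mul hv1 h2 (abs_nonneg _) hM0
    _ ≤ 4 * (M + B) * βv := by nlinarith

lemma Hc_gap_bound {c d : ℝ} (hcd : c < d) {m : ℕ} {f g h : ℝ → ℝ}
    (hf : ContDiffOn ℝ (m : ℕ∞) f (Icc c d)) (hg : ContDiffOn ℝ (m : ℕ∞) g (Icc c d))
    (hh : ContDiffOn ℝ (m : ℕ∞) h (Icc c d))
    (hode : ∀ t ∈ Icc c d, derivWithin h (Icc c d) t =
      2 * (derivWithin f (Icc c d) t * g t - derivWithin g (Icc c d) t * f t))
    {F G H : ℕ → ℝ → ℝ}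
    (hstar' : ∀ k, 1 ≤ k → k ≤ m → H k c = 2 * ∑ j ∈ Finset.range k,
      (Nat.choose (k-1) j : ℝ) * (F (k-j) c * G j c - G (k-j) c * F j c))
    {M B βv : ℝ} (hM0 : 0 ≤ M) (hB : 0 ≤ B) (hβv : 0 ≤ βv) (hβvB : βv ≤ B)
    (hMF : ∀ k ≤ m, |F k c| ≤ M) (hMG : ∀ k ≤ m, |G k c| ≤ M)
    (hbF : ∀ k ≤ m, ∀ x ∈ Icc c d, |iteratedDerivWithin k f (Icc c d) x - F k c| ≤ 2*βv)
    (hbG : ∀ k ≤ m, ∀ x ∈ Icc c d, |iteratedDerivWithin k g (Icc c d) x - G k c| ≤ 2*βv) :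
    ∀ k, 1 ≤ k → k ≤ m → ∀ x ∈ Icc c d,
      |iteratedDerivWithin k h (Icc c d) x - H k c| ≤ 2^(m+4) * (M + B) * βv := by
  intro k hk1 hkm x hx
  rw [leibniz_ode hcd hf hg hh hode k hk1 hkm x hx, hstar' k hk1 hkm, ← mul_sub, abs_mul,
    ← Finset.sum_sub_distrib]
  have hterm : ∀ j ∈ Finset.range k,
      |(Nat.choose (k-1) j : ℝ) * (iteratedDerivWithin (k-j) f (Icc c d) x *
          iteratedDerivWithin j g (Icc c d) x -
         iteratedDerivWithin (k-j) g (Icc c d) x * iteratedDerivWithin j f (Icc c d) x)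
        - (Nat.choose (k-1) j : ℝ) * (F (k-j) c * G j c - G (k-j) c * F j c)|
        ≤ (Nat.choose (k-1) j : ℝ) * (8 * (M + B) * βv) := by
    intro j hj
    have hjk := Finset.mem_range.1 hj
    have hkj1 : k - j ≤ m := by omega
    have hj1 : j ≤ m := by omega
    rw [← mul_sub, abs_mul, Nat.abs_cast]
    apply mul_le_mul_of_nonneg_left _ (Nat.cast_nonneg _)
    have e1 := prod_diff_bound hM0 hB hβv hβvB (hbF (k-j) hkj1 x hx) (hbG j hj1 x hx)
      (hMF (k-j) hkj1) (hMG j hj1)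
    have e2 := prod_diff_bound hM0 hB hβv hβvB (hbG (k-j) hkj1 x hx) (hbF j hj1 x hx)
      (hMG (k-j) hkj1) (hMF j hj1)
    calc |(iteratedDerivWithin (k-j) f (Icc c d) x * iteratedDerivWithin j g (Icc c d) x -
          iteratedDerivWithin (k-j) g (Icc c d) x * iteratedDerivWithin j f (Icc c d) x)
        - (F (k-j) c * G j c - G (k-j) c * F j c)|
        = |(iteratedDerivWithin (k-j) f (Icc c d) x * iteratedDerivWithin j g (Icc c d) x
            - F (k-j) c * G j c)
          - (iteratedDerivWithin (k-j) g (Icc c d) x * iteratedDerivWithin j f (Icc c d) x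
            - G (k-j) c * F j c)| := by ring_nf
      _ ≤ |iteratedDerivWithin (k-j) f (Icc c d) x * iteratedDerivWithin j g (Icc c d) x
            - F (k-j) c * G j c|
          + |iteratedDerivWithin (k-j) g (Icc c d) x * iteratedDerivWithin j f (Icc c d) x
            - G (k-j) c * F j c| := abs_sub _ _
      _ ≤ 8 * (M + B) * βv := by linarith
  have hsum := Finset.abs_sum_le_sum_abs (fun j =>
      (Nat.choose (k-1) j : ℝ) * (iteratedDerivWithin (k-j) f (Icc c d) x *
          iteratedDerivWithin j g (Icc c d) x -
         iteratedDerivWithin (k-j) g (Icc c d) x * iteratedDerivWithin j f (Icc c d) x)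
        - (Nat.choose (k-1) j : ℝ) * (F (k-j) c * G j c - G (k-j) c * F j c)) (Finset.range k)
  have hsum2 := Finset.sum_le_sum hterm
  have hchoose : ∑ j ∈ Finset.range k, (Nat.choose (k-1) j : ℝ) = 2^(k-1) := by
    obtain ⟨k', rfl⟩ : ∃ k', k = k' + 1 := ⟨k - 1, by omega⟩
    simp only [Nat.add_sub_cancel]
    rw [← Nat.cast_sum]
    rw [Nat.sum_range_choose]
    push_cast
    ring
  have hpow : (2:ℝ)^(k-1) ≤ 2^m := by
    apply pow_le_pow_right₀ (by norm_num)
    omega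
  have habs2 : |(2:ℝ)| = 2 := by norm_num
  rw [habs2]
  have hfinal : ∑ j ∈ Finset.range k, (Nat.choose (k-1) j : ℝ) * (8 * (M + B) * βv)
      = 2^(k-1) * (8 * (M + B) * βv) := by
    rw [← Finset.sum_mul, hchoose]
  have hMBβ : 0 ≤ 8 * (M + B) * βv := by positivity
  calc 2 * |∑ j ∈ Finset.range k, _| ≤ 2 * (2^(k-1) * (8 * (M + B) * βv)) := by
        have := le_trans hsum (le_trans hsum2 (le_of_eq hfinal))
        linarith
    _ ≤ 2 * (2^m * (8 * (M + B) * βv)) := by nlinarith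
    _ = 2^(m+4) * (M + B) * βv := by ring

open Classical in
noncomputable def glueJet (a b : ℕ → ℝ) (P : ℕ → ℝ → ℝ) (Pc : ℕ → ℝ → ℝ) (k : ℕ) (x : ℝ) : ℝ :=
  if h : ∃ i, x ∈ Ioo (a i) (b i) then
    iteratedDerivWithin k (Pc h.choose) (Icc (a h.choose) (b h.choose)) x
  else P k x

lemma glueJet_K {a b : ℕ → ℝ} {P : ℕ → ℝ → ℝ} {Pc : ℕ → ℝ → ℝ} {k : ℕ} {x : ℝ}
    (hnot : ∀ i, x ∉ Ioo (a i) (b i)) : glueJet a b P Pc k x = P k x := by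
  rw [glueJet]
  rw [dif_neg (by push_neg; exact fun i => hnot i)]

lemma glueJet_gap {a b : ℕ → ℝ} {P : ℕ → ℝ → ℝ} {Pc : ℕ → ℝ → ℝ} {k : ℕ} {x : ℝ} {i : ℕ}
    (hdisj : Pairwise (Function.onFun Disjoint fun i => Ioo (a i) (b i)))
    (hx : x ∈ Ioo (a i) (b i)) :
    glueJet a b P Pc k x = iteratedDerivWithin k (Pc i) (Icc (a i) (b i)) x := by
  have h : ∃ j, x ∈ Ioo (a j) (b j) := ⟨i, hx⟩
  rw [glueJet, dif_pos h]
  have hji : h.choose = i := by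
    by_contra hne
    exact Set.disjoint_left.1 (hdisj hne) h.choose_spec hx
  rw [hji]

lemma const_mul_modulus {β : ℝ → ℝ} (hβ : IsModulus β) {C : ℝ} (hC : 0 ≤ C) :
    IsModulus (fun t => C * β t) := by
  obtain ⟨h0, hmono, hz, ht⟩ := hβ
  refine ⟨fun t => mul_nonneg hC (h0 t), fun x hx y hy hxy =>
    mul_le_mul_of_nonneg_left (hmono hx hy hxy) hC, by simp [hz], ?_⟩
  have := ht.const_mul C
  simpa using this

/-- Proposition 6.8: gluing the jets `(F, G, H)` on `K` with the horizontal
curves `(𝓕ᵢ, 𝓖ᵢ, 𝓗ᵢ)` on the complementary intervals `[aᵢ, bᵢ]` produces a `C^m` horizontal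
curve on `I = [min K, max K]` whose derivatives agree with the jets on `K`. -/
theorem glued_curve_is_Cm_horizontal (m : ℕ) (hm : 1 ≤ m) (K : Set ℝ) (hK : IsCompact K)
    (hne : K.Nonempty) (I : Set ℝ) (hI : I = Icc (sInf K) (sSup K))
    (F G H : ℕ → ℝ → ℝ) (hjF : IsJet m K F) (hjG : IsJet m K G) (hjH : IsJet m K H)
    (hWF : IsWhitneyField m K F) (hWG : IsWhitneyField m K G) (hWH : IsWhitneyField m K H)
    (hstar : StarCond m K F G H)
    (a b : ℕ → ℝ) (hmem : ∀ i, a i ∈ K ∧ b i ∈ K ∧ a i < b i)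
    (hdisj : Pairwise (Function.onFun Disjoint fun i => Ioo (a i) (b i)))
    (hcover : I \ K = ⋃ i, Ioo (a i) (b i))
    (β : ℝ → ℝ) (hβ : IsModulus β)
    (Fc Gc Hc : ℕ → ℝ → ℝ)
    (hreg : ∀ i, ContDiffOn ℝ (m : ℕ∞) (Fc i) (Icc (a i) (b i)) ∧
      ContDiffOn ℝ (m : ℕ∞) (Gc i) (Icc (a i) (b i)) ∧
      ContDiffOn ℝ (m : ℕ∞) (Hc i) (Icc (a i) (b i)))
    (hhor : ∀ i, ∀ t ∈ Icc (a i) (b i),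
      derivWithin (Hc i) (Icc (a i) (b i)) t =
        2 * (derivWithin (Fc i) (Icc (a i) (b i)) t * Gc i t -
          derivWithin (Gc i) (Icc (a i) (b i)) t * Fc i t))
    (hend : ∀ i, ∀ k ≤ m,
      iteratedDerivWithin k (Fc i) (Icc (a i) (b i)) (a i) = F k (a i) ∧
      iteratedDerivWithin k (Gc i) (Icc (a i) (b i)) (a i) = G k (a i) ∧
      iteratedDerivWithin k (Hc i) (Icc (a i) (b i)) (a i) = H k (a i) ∧
      iteratedDerivWithin k (Fc i) (Icc (a i) (b i)) (b i) = F k (b i) ∧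
      iteratedDerivWithin k (Gc i) (Icc (a i) (b i)) (b i) = G k (b i) ∧
      iteratedDerivWithin k (Hc i) (Icc (a i) (b i)) (b i) = H k (b i))
    (hbound : ∀ i, ∀ k ≤ m, ∀ x ∈ Icc (a i) (b i),
      |iteratedDerivWithin k (Fc i) (Icc (a i) (b i)) x - F k (a i)| ≤ 2 * β (b i - a i) ∧
      |iteratedDerivWithin k (Gc i) (Icc (a i) (b i)) x - G k (a i)| ≤ 2 * β (b i - a i))
    (𝓕 𝓖 𝓗 : ℝ → ℝ)
    (hΓK : ∀ x ∈ K, 𝓕 x = F 0 x ∧ 𝓖 x = G 0 x ∧ 𝓗 x = H 0 x)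
    (hΓgap : ∀ i, ∀ x ∈ Ioo (a i) (b i), 𝓕 x = Fc i x ∧ 𝓖 x = Gc i x ∧ 𝓗 x = Hc i x) :
    ContDiffOn ℝ (m : ℕ∞) 𝓕 I ∧ ContDiffOn ℝ (m : ℕ∞) 𝓖 I ∧ ContDiffOn ℝ (m : ℕ∞) 𝓗 I ∧
      (∀ x ∈ I, derivWithin 𝓗 I x =
        2 * (derivWithin 𝓕 I x * 𝓖 x - derivWithin 𝓖 I x * 𝓕 x)) ∧
      (∀ x ∈ K, ∀ k ≤ m,
        iteratedDerivWithin k 𝓕 I x = F k x ∧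
        iteratedDerivWithin k 𝓖 I x = G k x ∧
        iteratedDerivWithin k 𝓗 I x = H k x) := by
  subst hI
  set I : Set ℝ := Icc (sInf K) (sSup K) with hIdef
  have hKI : K ⊆ I := fun x hx => ⟨csInf_le hK.bddBelow hx, le_csSup hK.bddAbove hx⟩
  have hgapsub : ∀ i, Ioo (a i) (b i) ⊆ I \ K := by
    intro i
    rw [hcover]
    exact subset_iUnion (fun j => Ioo (a j) (b j)) i
  have hgapK : ∀ i, ∀ x ∈ Ioo (a i) (b i), x ∉ K := fun i x hx => (hgapsub i hx).2
  have hgapI : ∀ i, Ioo (a i) (b i) ⊆ I := fun i x hx => (hgapsub i hx).1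
  have hIK : ∀ x ∈ I, x ∉ K → ∃ i, x ∈ Ioo (a i) (b i) := by
    intro x hxI hxK
    have : x ∈ I \ K := ⟨hxI, hxK⟩
    rw [hcover] at this
    exact mem_iUnion.1 this
  have hltIS : sInf K < sSup K := by
    have h0 := hmem 0
    have h1 : sInf K ≤ a 0 := csInf_le hK.bddBelow h0.1
    have h2 : b 0 ≤ sSup K := le_csSup hK.bddAbove h0.2.1
    linarith [h0.2.2]
  have hud : UniqueDiffOn ℝ I := uniqueDiffOn_Icc hltIS
  have hKnot : ∀ x ∈ K, ∀ i, x ∉ Ioo (a i) (b i) := fun x hx i h => hgapK i x h hx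
  -- moduli
  have hβ2 : IsModulus (fun t => 2 * β t) := const_mul_modulus hβ (by norm_num)
  obtain ⟨MF, hMF0, hMF⟩ := jet_bound hK m F hjF
  obtain ⟨MG, hMG0, hMG⟩ := jet_bound hK m G hjG
  set MFG := max MF MG with hMFG
  have hMFG0 : 0 ≤ MFG := le_trans hMF0 (le_max_left _ _)
  have hMFGF : ∀ k ≤ m, ∀ x ∈ K, |F k x| ≤ MFG :=
    fun k hk x hx => le_trans (hMF k hk x hx) (le_max_left _ _)
  have hMFGG : ∀ k ≤ m, ∀ x ∈ K, |G k x| ≤ MFG :=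
    fun k hk x hx => le_trans (hMG k hk x hx) (le_max_right _ _)
  set B := β (sSup K - sInf K) with hB
  have hB0 : 0 ≤ B := hβ.1 _
  set CH : ℝ := 2^(m+4) * (MFG + B) with hCH
  have hCH0 : 0 ≤ CH := by positivity
  have hβH : IsModulus (fun t => CH * β t) := const_mul_modulus hβ hCH0
  -- gap length facts
  have hgaplen : ∀ i, β (b i - a i) ≤ B := by
    intro i
    have h0 := hmem i
    have h1 : sInf K ≤ a i := csInf_le hK.bddBelow h0.1
    have h2 : b i ≤ sSup K := le_csSup hK.bddAbove h0.2.1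
    exact hβ.2.1 (by simp; linarith [h0.2.2]) (by simp; linarith) (by linarith)
  -- the H-jet bound on gaps
  have hbndH : ∀ i, ∀ k, 1 ≤ k → k ≤ m → ∀ x ∈ Icc (a i) (b i),
      |iteratedDerivWithin k (Hc i) (Icc (a i) (b i)) x - H k (a i)| ≤ CH * β (b i - a i) := by
    intro i
    have hab := (hmem i).2.2
    have haK := (hmem i).1
    exact Hc_gap_bound hab (hreg i).1 (hreg i).2.1 (hreg i).2.2 (hhor i)
      (fun k hk1 hkm => hstar k hk1 hkm (a i) haK)
      hMFG0 hB0 (hβ.1 _) (hgaplen i)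
      (fun k hk => hMFGF k hk (a i) haK) (fun k hk => hMFGG k hk (a i) haK)
      (fun k hk x hx => (hbound i k hk x hx).1) (fun k hk x hx => (hbound i k hk x hx).2)
  -- glued jet families
  set pkF := glueJet a b F Fc with hpkF
  set pkG := glueJet a b G Gc with hpkG
  set pkH := glueJet a b H Hc with hpkH
  have hpKF : ∀ k ≤ m, ∀ x ∈ K, pkF k x = F k x := fun k _ x hx => glueJet_K (hKnot x hx)
  have hpKG : ∀ k ≤ m, ∀ x ∈ K, pkG k x = G k x := fun k _ x hx => glueJet_K (hKnot x hx)
  have hpKH : ∀ k ≤ m, ∀ x ∈ K, pkH k x = H k x := fun k _ x hx => glueJet_K (hKnot x hx)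
  have hpGF : ∀ k ≤ m, ∀ i, ∀ x ∈ Ioo (a i) (b i),
      pkF k x = iteratedDerivWithin k (Fc i) (Icc (a i) (b i)) x :=
    fun k _ i x hx => glueJet_gap hdisj hx
  have hpGG : ∀ k ≤ m, ∀ i, ∀ x ∈ Ioo (a i) (b i),
      pkG k x = iteratedDerivWithin k (Gc i) (Icc (a i) (b i)) x :=
    fun k _ i x hx => glueJet_gap hdisj hx
  have hpGH : ∀ k ≤ m, ∀ i, ∀ x ∈ Ioo (a i) (b i),
      pkH k x = iteratedDerivWithin k (Hc i) (Icc (a i) (b i)) x :=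
    fun k _ i x hx => glueJet_gap hdisj hx
  -- MAIN applications
  have mainF := MAIN m hm hK hne hmem hdisj hIK hgapK hgapI hjF hWF hβ2
    (fun i => (hreg i).1) (fun i k hk => ⟨(hend i k hk).1, (hend i k hk).2.2.2.1⟩)
    (fun i k hk1 hkm x hx => (hbound i k hkm x hx).1) hpKF hpGF
  have mainG := MAIN m hm hK hne hmem hdisj hIK hgapK hgapI hjG hWG hβ2
    (fun i => (hreg i).2.1) (fun i k hk => ⟨(hend i k hk).2.1, (hend i k hk).2.2.2.2.1⟩)
    (fun i k hk1 hkm x hx => (hbound i k hkm x hx).2) hpKG hpGG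
  have mainH := MAIN m hm hK hne hmem hdisj hIK hgapK hgapI hjH hWH hβH
    (fun i => (hreg i).2.2) (fun i k hk => ⟨(hend i k hk).2.2.1, (hend i k hk).2.2.2.2.2⟩)
    hbndH hpKH hpGH
  have chainF := chain_lemma hud m pkF mainF.1 mainF.2
  have chainG := chain_lemma hud m pkG mainG.1 mainG.2
  have chainH := chain_lemma hud m pkH mainH.1 mainH.2
  -- the glued functions agree with pk* 0 on I
  have hEqF : ∀ x ∈ I, 𝓕 x = pkF 0 x := by
    intro x hx
    by_cases hxK : x ∈ K
    · rw [hpKF 0 (by omega) x hxK, (hΓK x hxK).1]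
    · obtain ⟨i, hi⟩ := hIK x hx hxK
      rw [hpGF 0 (by omega) i x hi, iteratedDerivWithin_zero, (hΓgap i x hi).1]
  have hEqG : ∀ x ∈ I, 𝓖 x = pkG 0 x := by
    intro x hx
    by_cases hxK : x ∈ K
    · rw [hpKG 0 (by omega) x hxK, (hΓK x hxK).2.1]
    · obtain ⟨i, hi⟩ := hIK x hx hxK
      rw [hpGG 0 (by omega) i x hi, iteratedDerivWithin_zero, (hΓgap i x hi).2.1]
  have hEqH : ∀ x ∈ I, 𝓗 x = pkH 0 x := by
    intro x hx
    by_cases hxK : x ∈ K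
    · rw [hpKH 0 (by omega) x hxK, (hΓK x hxK).2.2]
    · obtain ⟨i, hi⟩ := hIK x hx hxK
      rw [hpGH 0 (by omega) i x hi, iteratedDerivWithin_zero, (hΓgap i x hi).2.2]
  -- derivWithin of glued functions
  have hderF : ∀ x ∈ I, derivWithin 𝓕 I x = pkF 1 x := by
    intro x hx
    rw [derivWithin_congr (fun y hy => hEqF y hy) (hEqF x hx)]
    exact (mainF.1 0 hm x hx).derivWithin (hud x hx)
  have hderG : ∀ x ∈ I, derivWithin 𝓖 I x = pkG 1 x := by
    intro x hx
    rw [derivWithin_congr (fun y hy => hEqG y hy) (hEqG x hx)]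
    exact (mainG.1 0 hm x hx).derivWithin (hud x hx)
  have hderH : ∀ x ∈ I, derivWithin 𝓗 I x = pkH 1 x := by
    intro x hx
    rw [derivWithin_congr (fun y hy => hEqH y hy) (hEqH x hx)]
    exact (mainH.1 0 hm x hx).derivWithin (hud x hx)
  refine ⟨chainF.1.congr hEqF, chainG.1.congr hEqG, chainH.1.congr hEqH, ?_, ?_⟩
  · -- horizontality
    intro x hx
    rw [hderF x hx, hderG x hx, hderH x hx]
    by_cases hxK : x ∈ K
    · rw [hpKF 1 hm x hxK, hpKG 1 hm x hxK, hpKH 1 hm x hxK,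
        (hΓK x hxK).1, (hΓK x hxK).2.1]
      have := hstar 1 le_rfl hm x hxK
      simpa [Finset.sum_range_one] using this
    · obtain ⟨i, hi⟩ := hIK x hx hxK
      have hab := (hmem i).2.2
      have hxIcc : x ∈ Icc (a i) (b i) := Ioo_subset_Icc_self hi
      have hudi := uniqueDiffOn_Icc hab x hxIcc
      rw [hpGH 1 hm i x hi, hpGF 1 hm i x hi, hpGG 1 hm i x hi,
        (hΓgap i x hi).1, (hΓgap i x hi).2.1,
        iteratedDerivWithin_one, iteratedDerivWithin_one,
        iteratedDerivWithin_one]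
      exact hhor i x hxIcc
  · -- jets on K
    intro x hxK k hk
    have hxI := hKI hxK
    refine ⟨?_, ?_, ?_⟩
    · rw [iteratedDerivWithin_congr (fun y hy => hEqF y hy) hxI, chainF.2 k hk x hxI, hpKF k hk x hxK]
    · rw [iteratedDerivWithin_congr (fun y hy => hEqG y hy) hxI, chainG.2 k hk x hxI, hpKG k hk x hxK]
    · rw [iteratedDerivWithin_congr (fun y hy => hEqH y hy) hxI, chainH.2 k hk x hxI, hpKH k hk x hxK]
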